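/- Let (X,r) be a square-free solution with mpl(X,r) ≤ 3 (equivalently, L_{ᵝx} = L_{ᵅx} whenever α, β lie in the same G(X,r)-orbit). Then for each G(X,r)-orbit X_j, the subgroup 𝒢(X_j) of Sym(X) generated by {L_α : α ∈ X_j} is abelian. -/

import Mathlib

namespace YBPaper

variable {X : Type*}

/-- Left translation: `lact r x y = ˣy`. -/
def lact (r : X × X → X × X) (x y : X) : X := (r (x, y)).1

/-- Right translation: `ract r x y = xʸ`. -/
def ract (r : X × X → X × X) (x y : X) : X := (r (x, y)).2

def r12 (r : X × X → X × X) : X × X × X → X × X × X :=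
  fun p => ((r (p.1, p.2.1)).1, (r (p.1, p.2.1)).2, p.2.2)

def r23 (r : X × X → X × X) : X × X × X → X × X × X :=
  fun p => (p.1, r (p.2.1, p.2.2))

/-- A non-degenerate involutive square-free set-theoretic solution of the YBE. -/
structure IsSquareFreeSolution (r : X × X → X × X) : Prop where
  nondegL : ∀ x : X, Function.Bijective fun y => (r (x, y)).1
  nondegR : ∀ y : X, Function.Bijective fun x => (r (x, y)).2
  invol : ∀ p : X × X, r (r p) = p
  sqfree : ∀ x : X, r (x, x) = (x, x)
  braided : ∀ p : X × X × X, r12 r (r23 r (r12 r p)) = r23 r (r12 r (r23 r p))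

/-- `relk l k x y` means the images of `x` and `y` in the `k`-th retract coincide. -/
def relk (l : X → X → X) : ℕ → X → X → Prop
  | 0 => fun x y => x = y
  | (k+1) => fun x y => ∀ z : X, relk l k (l x z) (l y z)

/-- `mplLe l m` : the `m`-th retract is a one-element solution, i.e. `mpl ≤ m`. -/
def mplLe (l : X → X → X) (m : ℕ) : Prop := ∀ x y : X, relk l m x y

/-- `mplEq l m` : the multipermutation level is exactly `m`. -/
def mplEq (l : X → X → X) (m : ℕ) : Prop := mplLe l m ∧ ∀ k < m, ¬ mplLe l k

/-- The set of left translations, as permutations. -/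
def lperms (r : X × X → X × X) : Set (Equiv.Perm X) :=
  {σ : Equiv.Perm X | ∃ x : X, ∀ y : X, σ y = (r (x, y)).1}

/-- The YB permutation group `𝒢(X,r)`, generated by the left translations. -/
def Gcal (r : X × X → X × X) : Subgroup (Equiv.Perm X) := Subgroup.closure (lperms r)


section Aux

variable (r : X × X → X × X)

lemma lact_lact_aux (h : IsSquareFreeSolution r) (β α z : X) :
    lact r β (lact r α z) = lact r (lact r β α) (lact r (ract r β α) z) := by
  have hb := congrArg (fun p => p.1) (h.braided (β, α, z))
  simpa [r12, r23, lact, ract] using hb.symm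

lemma lact_sq (h : IsSquareFreeSolution r) (x : X) : lact r x x = x := by
  have := h.sqfree x
  simp [lact, this]

lemma lact_ract (h : IsSquareFreeSolution r) (β α : X) :
    lact r (lact r β α) (ract r β α) = β := by
  have := congrArg (fun p => p.1) (h.invol (β, α))
  simpa [lact, ract] using this

end Aux

/-- if `L_{ᵝx} = L_{ᵅx}` whenever `α, β` lie in the same
`𝒢(X,r)`-orbit (i.e. `mpl ≤ 3`), then for each orbit the subgroup generated by the
left translations by its elements is abelian. -/
theorem stmt17 {X : Type*} (r : X × X → X × X) (h : IsSquareFreeSolution r)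
    (hcond : ∀ α β x : X, β ∈ MulAction.orbit (↥(Gcal r)) α →
        ∀ z : X, lact r (lact r β x) z = lact r (lact r α x) z) :
    ∀ x0 : X,
      ∀ σ ∈ Subgroup.closure
          {π : Equiv.Perm X | ∃ a ∈ MulAction.orbit (↥(Gcal r)) x0, ∀ y, π y = lact r a y},
      ∀ τ ∈ Subgroup.closure
          {π : Equiv.Perm X | ∃ a ∈ MulAction.orbit (↥(Gcal r)) x0, ∀ y, π y = lact r a y},
        σ * τ = τ * σ := by
  intro x0
  set S : Set (Equiv.Perm X) :=
    {π : Equiv.Perm X | ∃ a ∈ MulAction.orbit (↥(Gcal r)) x0, ∀ y, π y = lact r a y} with hS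
  -- generators commute
  have key : ∀ σ ∈ S, ∀ τ ∈ S, σ * τ = τ * σ := by
    rintro σ ⟨α, hα, hσ⟩ τ ⟨β, hβ, hτ⟩
    have horbα : MulAction.orbit (↥(Gcal r)) α = MulAction.orbit (↥(Gcal r)) x0 :=
      MulAction.orbit_eq_iff.mpr hα
    -- step 2: L_{ᵝα} = L_α
    have hβα : β ∈ MulAction.orbit (↥(Gcal r)) α := by rw [horbα]; exact hβ
    have step2 : ∀ z, lact r (lact r β α) z = lact r α z := by
      intro z
      have := hcond α β α hβα z
      rwa [lact_sq r h α] at this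
    -- γ := β^α lies in the orbit of x0
    set u := lact r β α with hu
    set γ := ract r β α with hγ
    have hπbij : Function.Bijective (fun y => (r (u, y)).1) := h.nondegL u
    set π : Equiv.Perm X := Equiv.ofBijective _ hπbij with hπ
    have hπmem : π ∈ Gcal r := Subgroup.subset_closure ⟨u, fun y => rfl⟩
    have hπγ : π γ = β := lact_ract r h β α
    obtain ⟨g, hg⟩ := hβ
    have hγorb : γ ∈ MulAction.orbit (↥(Gcal r)) x0 := by
      refine ⟨(⟨π, hπmem⟩ : ↥(Gcal r))⁻¹ * g, ?_⟩
      show ((⟨π, hπmem⟩ : ↥(Gcal r))⁻¹ * g) • x0 = γ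
      have h1 : ((⟨π, hπmem⟩ : ↥(Gcal r))⁻¹ * g) • x0 = π⁻¹ (g • x0) := rfl
      have h2 : (fun m : ↥(Gcal r) => m • x0) g = g • x0 := rfl
      rw [h1, ← h2, hg, ← hπγ]; exact Equiv.symm_apply_apply π γ
    have hαγ : α ∈ MulAction.orbit (↥(Gcal r)) γ := by
      rw [MulAction.orbit_eq_iff.mpr hγorb]; exact hα
    -- step 3: L_γ = L_β
    have hlactαγ : lact r α γ = β := by rw [← step2 γ]; exact hπγ
    have step3 : ∀ z, lact r β z = lact r γ z := by
      intro z
      have := hcond γ α γ hαγ z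
      rwa [hlactαγ, lact_sq r h γ] at this
    -- combine
    ext z
    simp only [Equiv.Perm.mul_apply, hσ, hτ]
    calc lact r α (lact r β z)
        = lact r α (lact r γ z) := by rw [step3]
      _ = lact r u (lact r γ z) := (step2 _).symm
      _ = lact r β (lact r α z) := (lact_lact_aux r h β α z).symm
  -- extend to the closure
  have step1 : ∀ π ∈ S, ∀ τ ∈ Subgroup.closure S, π * τ = τ * π := by
    intro π hπ τ hτ
    have hle : Subgroup.closure S ≤ Subgroup.centralizer {π} := by
      rw [Subgroup.closure_le]
      intro τ' hτ'
      rw [SetLike.mem_coe, Subgroup.mem_centralizer_iff]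
      rintro g rfl
      exact key _ hπ _ hτ'
    have := Subgroup.mem_centralizer_iff.mp (hle hτ)
    exact this π rfl
  have step4 : Subgroup.closure S ≤ Subgroup.centralizer (Subgroup.closure S : Subgroup _) := by
    rw [Subgroup.closure_le]
    intro π hπ
    rw [SetLike.mem_coe, Subgroup.mem_centralizer_iff]
    intro g hg
    exact (step1 π hπ g hg).symm
  intro σ hσ τ hτ
  exact (Subgroup.mem_centralizer_iff.mp (step4 hσ) τ hτ).symm

end YBPaper
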